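/- Let G be a group, and let B and M be abelian groups with a symmetric ℤ-bilinear map c : B × B → M. For any cocycles α ∈ Z^i(G,B) and β ∈ Z^j(G,B), the cochain α ∧_c β − (−1)^{ij} · β ∧_c α ∈ C^{i+j}(G,M) is a coboundary, i.e. it lies in B^{i+j}(G,M); hence the induced cup product on cohomology satisfies [α] ∪_c [β] = (−1)^{ij} [β] ∪_c [α]. -/

import Mathlib

/-!
Statement 1: graded commutativity of the cup product along a symmetric
ℤ-bilinear pairing: for cocycles `α ∈ Z^i(G,B)`, `β ∈ Z^j(G,B)`,
`α ∧_c β − (−1)^{ij} β ∧_c α` is a coboundary in `C^{i+j}(G,M)`.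
-/

namespace Zesting

/-- The inhomogeneous group-cohomology differential (trivial action). -/
def dAdd {G M : Type*} [Monoid G] [AddCommGroup M] (n : ℕ)
    (f : (Fin n → G) → M) : (Fin (n + 1) → G) → M :=
  fun g => f (fun k => g k.succ) +
    ∑ j : Fin (n + 1), ((-1 : ℤ) ^ ((j : ℕ) + 1)) • f (Fin.contractNth j (· * ·) g)

/-- The wedge product of cochains along a pairing `c`. -/
def wedge {G B B' M : Type*} (c : B → B' → M) {i j : ℕ}
    (α : (Fin i → G) → B) (β : (Fin j → G) → B') : (Fin (i + j) → G) → M :=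
  fun g => c (α fun k => g (Fin.castAdd j k)) (β fun k => g (Fin.natAdd i k))

/-- `f ∈ B^n(G,M)`, i.e. `f` is a coboundary (with the convention `B^0 = 0`). -/
def IsCoboundary {G M : Type*} [Monoid G] [AddCommGroup M] :
    (n : ℕ) → ((Fin n → G) → M) → Prop
  | 0, f => f = 0
  | (m + 1), f => ∃ h : (Fin m → G) → M, f = dAdd m h

section Aux

open Finset

/-- `dl k` is the `k`-th face/degeneracy index map on naturals. -/
def dl (k m : ℕ) : ℕ := if m < k then m else m + 1

/-- "gap" injection with gap of width `q` after position `a`. -/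
def ga (q a r : ℕ) : ℕ := if r ≤ a then r else r + q

/-- "gap" injection with gap of width `q+1` after position `a`. -/
def gb (q a r : ℕ) : ℕ := if r ≤ a then r else r + q + 1

lemma neg_one_pow_add_two_mul (m t : ℕ) : (-1 : ℤ) ^ (m + 2 * t) = (-1) ^ m := by
  rw [pow_add, pow_mul, neg_one_sq, one_pow, mul_one]

lemma neg_one_pow_eq {e f t : ℕ} (h : e = f + 2 * t) : (-1 : ℤ) ^ e = (-1) ^ f := by
  rw [h, neg_one_pow_add_two_mul]

lemma neg_one_pow_eq_neg {e f t : ℕ} (h : e = f + (2 * t + 1)) :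
    (-1 : ℤ) ^ e = -(-1) ^ f := by
  rw [h, show f + (2 * t + 1) = f + 2 * t + 1 by omega, pow_succ, neg_one_pow_add_two_mul]
  ring

lemma smul_congr {M₀ : Type*} [AddCommGroup M₀] (z : M₀) {e f : ℕ} (t : ℕ)
    (h : e = f + 2 * t) : ((-1 : ℤ) ^ e) • z = ((-1 : ℤ) ^ f) • z := by
  rw [neg_one_pow_eq h]

lemma smul_congr_neg {M₀ : Type*} [AddCommGroup M₀] (z : M₀) {e f : ℕ} (t : ℕ)
    (h : e = f + (2 * t + 1)) : ((-1 : ℤ) ^ e) • z = -(((-1 : ℤ) ^ f) • z) := by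
  rw [neg_one_pow_eq_neg h, neg_smul]

lemma smul_neg_one {M₀ : Type*} [AddCommGroup M₀] (z : M₀) {e : ℕ} (t : ℕ)
    (h : e = 2 * t + 1) : ((-1 : ℤ) ^ e) • z = -z := by
  rw [neg_one_pow_eq_neg (f := 0) (t := t) (by omega), pow_zero, neg_smul, one_smul]

section Core

variable {M₀ : Type*} [AddCommGroup M₀]

/-- summand of `d` of the cup-1 product -/
def cT (atom : (ℕ → ℕ) → (ℕ → ℕ) → M₀) (i q k a : ℕ) : M₀ :=
  ((-1 : ℤ) ^ (k + (i * (q + 1) + (a + 1) * (q + 2)))) •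
    atom (fun r => dl k (ga q a r)) (fun m => dl k (a + m))

/-- summand of `(dA) ∪₁ B` -/
def cU (atom : (ℕ → ℕ) → (ℕ → ℕ) → M₀) (i q a r : ℕ) : M₀ :=
  ((-1 : ℤ) ^ ((i + 1) * (q + 1) + (a + 1) * (q + 2) + 1 + r)) •
    atom (fun s => ga q a (dl r s)) (fun m => a + m)

/-- summand of `A ∪₁ (dB)` -/
def cV (atom : (ℕ → ℕ) → (ℕ → ℕ) → M₀) (i q a r : ℕ) : M₀ :=
  ((-1 : ℤ) ^ ((i + 1) * (q + 1) + 1 + a * (q + 1) + r)) •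
    atom (fun s => gb q a s) (fun m => a + dl r m)

/-- `A ∪ B` -/
def cX1 (atom : (ℕ → ℕ) → (ℕ → ℕ) → M₀) (i : ℕ) : M₀ :=
  atom (fun r => r) (fun m => i + m)

/-- `± B ∪ A` -/
def cX2 (atom : (ℕ → ℕ) → (ℕ → ℕ) → M₀) (i q : ℕ) : M₀ :=
  ((-1 : ℤ) ^ (i * (q + 1) + 1)) • atom (fun r => q + 1 + r) (fun m => m)

variable (atom : (ℕ → ℕ) → (ℕ → ℕ) → M₀) (i q : ℕ)
variable (hatom : ∀ f f' g g' : ℕ → ℕ, (∀ r, r ≤ i → f r = f' r) →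
  (∀ m, m ≤ q + 1 → g m = g' m) → atom f g = atom f' g')

include hatom

lemma t_m1 {a k : ℕ} (ha : a < i) (hk : k ≤ a) :
    cU atom i q (a + 1) k = cT atom i q k a := by
  unfold cU cT
  rw [hatom _ (fun r => dl k (ga q a r)) _ (fun m => dl k (a + m))
      (fun r hr => by simp only [dl, ga]; first | (split_ifs <;> omega) | omega)
      (fun m hm => by simp only [dl]; first | (split_ifs <;> omega) | omega)]
  exact smul_congr _ (q + 2) (by ring)

lemma t_m2 {a t : ℕ} (ha : a < i) (ht : t < i - a) :
    cU atom i q a (a + 2 + t) = cT atom i q (a + q + 2 + t) a := by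
  unfold cU cT
  rw [hatom _ (fun r => dl (a + q + 2 + t) (ga q a r)) _ (fun m => dl (a + q + 2 + t) (a + m))
      (fun r hr => by simp only [dl, ga]; first | (split_ifs <;> omega) | omega)
      (fun m hm => by simp only [dl]; first | (split_ifs <;> omega) | omega)]
  exact smul_congr _ 1 (by ring)

lemma t_m3 {a t : ℕ} (ha : a < i) (ht : t < q + 1) :
    cV atom i q a (t + 1) = cT atom i q (a + 1 + t) a := by
  unfold cV cT
  rw [hatom (fun r => dl (a + 1 + t) (ga q a r)) (fun s => gb q a s)
      (fun m => dl (a + 1 + t) (a + m)) (fun m => a + dl (t + 1) m)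
      (fun r hr => by simp only [dl, ga, gb]; first | (split_ifs <;> omega) | omega)
      (fun m hm => by simp only [dl]; first | (split_ifs <;> omega) | omega)]
  exact (smul_congr _ a (by ring)).symm

lemma t_c4a {a : ℕ} (ha : a < i) :
    cU atom i q (a + 1) (a + 1) = -cV atom i q a 0 := by
  unfold cU cV
  rw [hatom _ (fun s => gb q a s) _ (fun m => a + dl 0 m)
      (fun r hr => by simp only [dl, ga, gb]; first | (split_ifs <;> omega) | omega)
      (fun m hm => by simp only [dl]; first | (split_ifs <;> omega) | omega)]
  exact smul_congr_neg _ (a + q + 2) (by ring)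

lemma t_c4b : cU atom i q 0 0 = -cX2 atom i q := by
  unfold cU cX2
  rw [hatom _ (fun r => q + 1 + r) _ (fun m => m)
      (fun r hr => by simp only [dl, ga]; first | (split_ifs <;> omega) | omega)
      (fun m hm => by omega)]
  exact smul_congr_neg _ (q + 1) (by ring)

lemma t_c5a {a : ℕ} (ha : a < i) :
    cU atom i q a (a + 1) = -cV atom i q a (q + 2) := by
  unfold cU cV
  rw [hatom _ (fun s => gb q a s) _ (fun m => a + dl (q + 2) m)
      (fun r hr => by simp only [dl, ga, gb]; first | (split_ifs <;> omega) | omega)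
      (fun m hm => by simp only [dl]; first | (split_ifs <;> omega) | omega)]
  exact smul_congr_neg _ a (by ring)

lemma t_c5b : cU atom i q i (i + 1) = -cX1 atom i := by
  unfold cU cX1
  rw [hatom _ (fun r => r) _ (fun m => i + m)
      (fun r hr => by simp only [dl, ga]; first | (split_ifs <;> omega) | omega)
      (fun m hm => rfl)]
  exact smul_neg_one _ ((i + 1) * (q + 1) + i + 1) (by ring)

theorem core :
    (∑ k ∈ range (i + q + 2), ∑ a ∈ range i, cT atom i q k a)
      = (∑ a ∈ range (i + 1), ∑ r ∈ range (i + 2), cU atom i q a r)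
        + (∑ a ∈ range i, ∑ r ∈ range (q + 3), cV atom i q a r)
        + cX1 atom i + cX2 atom i q := by
  have hL : (∑ k ∈ range (i + q + 2), ∑ a ∈ range i, cT atom i q k a)
      = (∑ a ∈ range i, ∑ k ∈ Ico 0 (a + 1), cT atom i q k a)
        + (∑ a ∈ range i, ∑ k ∈ Ico (a + 1) (a + q + 2), cT atom i q k a)
        + (∑ a ∈ range i, ∑ k ∈ Ico (a + q + 2) (i + q + 2), cT atom i q k a) := by
    rw [Finset.sum_comm, ← Finset.sum_add_distrib, ← Finset.sum_add_distrib]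
    refine Finset.sum_congr rfl fun a ha => ?_
    rw [Finset.mem_range] at ha
    rw [range_eq_Ico,
      ← Finset.sum_Ico_consecutive (fun k => cT atom i q k a)
        (Nat.zero_le (a + 1)) (show a + 1 ≤ i + q + 2 by omega),
      ← Finset.sum_Ico_consecutive (fun k => cT atom i q k a)
        (show a + 1 ≤ a + q + 2 by omega) (show a + q + 2 ≤ i + q + 2 by omega)]
    exact (add_assoc _ _ _).symm
  have hR1 : (∑ a ∈ range (i + 1), ∑ r ∈ range (i + 2), cU atom i q a r)
      = (∑ a ∈ range (i + 1), ∑ r ∈ Ico 0 a, cU atom i q a r)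
        + (∑ a ∈ range (i + 1), cU atom i q a a)
        + (∑ a ∈ range (i + 1), cU atom i q a (a + 1))
        + (∑ a ∈ range (i + 1), ∑ r ∈ Ico (a + 2) (i + 2), cU atom i q a r) := by
    rw [← Finset.sum_add_distrib, ← Finset.sum_add_distrib, ← Finset.sum_add_distrib]
    refine Finset.sum_congr rfl fun a ha => ?_
    rw [Finset.mem_range] at ha
    rw [range_eq_Ico,
      ← Finset.sum_Ico_consecutive (fun r => cU atom i q a r)
        (Nat.zero_le a) (show a ≤ i + 2 by omega),
      Finset.sum_eq_sum_Ico_succ_bot (show a < i + 2 by omega),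
      Finset.sum_eq_sum_Ico_succ_bot (show a + 1 < i + 2 by omega)]
    abel
  have hR2 : (∑ a ∈ range i, ∑ r ∈ range (q + 3), cV atom i q a r)
      = (∑ a ∈ range i, cV atom i q a 0)
        + (∑ a ∈ range i, ∑ t ∈ range (q + 1), cV atom i q a (t + 1))
        + (∑ a ∈ range i, cV atom i q a (q + 2)) := by
    rw [← Finset.sum_add_distrib, ← Finset.sum_add_distrib]
    refine Finset.sum_congr rfl fun a ha => ?_
    rw [show q + 3 = (q + 2) + 1 from rfl, Finset.sum_range_succ,
      show q + 2 = (q + 1) + 1 from rfl, Finset.sum_range_succ']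
    abel
  have m1 : (∑ a ∈ range (i + 1), ∑ r ∈ Ico 0 a, cU atom i q a r)
      = ∑ a ∈ range i, ∑ k ∈ Ico 0 (a + 1), cT atom i q k a := by
    rw [Finset.sum_range_succ']
    simp only [Finset.Ico_self, Finset.sum_empty, add_zero]
    refine Finset.sum_congr rfl fun a ha => ?_
    rw [Finset.mem_range] at ha
    refine Finset.sum_congr rfl fun k hk => ?_
    rw [Finset.mem_Ico] at hk
    exact t_m1 atom i q hatom ha (by omega)
  have m2 : (∑ a ∈ range (i + 1), ∑ r ∈ Ico (a + 2) (i + 2), cU atom i q a r)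
      = ∑ a ∈ range i, ∑ k ∈ Ico (a + q + 2) (i + q + 2), cT atom i q k a := by
    rw [Finset.sum_range_succ]
    simp only [Finset.Ico_self, Finset.sum_empty, add_zero]
    refine Finset.sum_congr rfl fun a ha => ?_
    rw [Finset.mem_range] at ha
    rw [Finset.sum_Ico_eq_sum_range, Finset.sum_Ico_eq_sum_range,
      show i + 2 - (a + 2) = i - a by omega, show i + q + 2 - (a + q + 2) = i - a by omega]
    refine Finset.sum_congr rfl fun t ht => ?_
    rw [Finset.mem_range] at ht
    exact t_m2 atom i q hatom ha ht
  have m3 : (∑ a ∈ range i, ∑ t ∈ range (q + 1), cV atom i q a (t + 1))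
      = ∑ a ∈ range i, ∑ k ∈ Ico (a + 1) (a + q + 2), cT atom i q k a := by
    refine Finset.sum_congr rfl fun a ha => ?_
    rw [Finset.mem_range] at ha
    rw [Finset.sum_Ico_eq_sum_range, show a + q + 2 - (a + 1) = q + 1 by omega]
    refine Finset.sum_congr rfl fun t ht => ?_
    rw [Finset.mem_range] at ht
    exact t_m3 atom i q hatom ha ht
  have c4 : (∑ a ∈ range (i + 1), cU atom i q a a)
      = -((∑ a ∈ range i, cV atom i q a 0) + cX2 atom i q) := by
    refine eq_neg_of_add_eq_zero_left ?_
    rw [Finset.sum_range_succ',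
      Finset.sum_congr rfl (fun a ha => t_c4a atom i q hatom (Finset.mem_range.mp ha)),
      t_c4b atom i q hatom]
    rw [Finset.sum_neg_distrib]
    abel
  have c5 : (∑ a ∈ range (i + 1), cU atom i q a (a + 1))
      = -((∑ a ∈ range i, cV atom i q a (q + 2)) + cX1 atom i) := by
    refine eq_neg_of_add_eq_zero_left ?_
    rw [Finset.sum_range_succ,
      Finset.sum_congr rfl (fun a ha => t_c5a atom i q hatom (Finset.mem_range.mp ha)),
      t_c5b atom i q hatom]
    rw [Finset.sum_neg_distrib]
    abel
  rw [hL, hR1, hR2, m1, m2, m3, c4, c5]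
  abel

end Core

section GroupSide

open Finset

variable {G : Type*} [Group G]

lemma apply_fin_eq {α : Type*} {n : ℕ} (x : Fin n → α) {u v : Fin n} (h : u.1 = v.1) :
    x u = x v := congrArg x (Fin.ext h)

/-- successive differences of a homogeneous tuple -/
def diffs (n : ℕ) (x : Fin (n + 1) → G) : Fin n → G :=
  fun k => (x k.castSucc)⁻¹ * x k.succ

/-- from inhomogeneous to homogeneous cochains -/
def Phi {V : Type*} (n : ℕ) (f : (Fin n → G) → V) : (Fin (n + 1) → G) → V :=
  fun x => f (diffs n x)

/-- the homogeneous (simplicial) differential -/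
def dHom {M : Type*} [AddCommGroup M] (n : ℕ) (F : (Fin (n + 1) → G) → M) :
    (Fin (n + 2) → G) → M :=
  fun x => ∑ k : Fin (n + 2), ((-1 : ℤ) ^ (k : ℕ)) • F (fun s => x (k.succAbove s))

variable {M : Type*} [AddCommGroup M]

lemma phi_dAdd (n : ℕ) (f : (Fin n → G) → M) :
    Phi (n + 1) (dAdd n f) = dHom n (Phi n f) := by
  funext x
  show dAdd n f (diffs (n + 1) x) = _
  unfold dAdd dHom Phi
  rw [Fin.sum_univ_succ (f := fun k : Fin (n + 2) =>
    ((-1 : ℤ) ^ (k : ℕ)) • f (diffs n fun s => x (k.succAbove s)))]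
  congr 1
  · rw [show (((0 : Fin (n + 2)) : ℕ)) = 0 from rfl, pow_zero, one_smul]
    refine congrArg f ?_
    funext k
    simp only [diffs]
    refine congrArg₂ (fun (u v : G) => u⁻¹ * v) ?_ ?_
    · exact apply_fin_eq x (by
        simp only [Fin.succAbove, apply_ite Fin.val, Fin.lt_def, Fin.coe_castSucc,
          Fin.val_succ, Fin.val_zero]
        split_ifs <;> omega)
    · exact apply_fin_eq x (by
        simp only [Fin.succAbove, apply_ite Fin.val, Fin.lt_def, Fin.coe_castSucc,
          Fin.val_succ, Fin.val_zero]
        split_ifs <;> omega)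
  · refine Finset.sum_congr rfl fun k _ => ?_
    rw [Fin.val_succ]
    refine congrArg (fun z => ((-1 : ℤ) ^ ((k : ℕ) + 1)) • z) (congrArg f ?_)
    funext m
    rcases lt_trichotomy (m : ℕ) (k : ℕ) with h | h | h
    · rw [Fin.contractNth_apply_of_lt _ _ _ _ h]
      simp only [diffs]
      refine congrArg₂ (fun (u v : G) => u⁻¹ * v) ?_ ?_
      · exact apply_fin_eq x (by
          simp only [Fin.succAbove, apply_ite Fin.val, Fin.lt_def, Fin.coe_castSucc,
            Fin.val_succ]
          split_ifs <;> omega)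
      · exact apply_fin_eq x (by
          simp only [Fin.succAbove, apply_ite Fin.val, Fin.lt_def, Fin.coe_castSucc,
            Fin.val_succ]
          split_ifs <;> omega)
    · rw [Fin.contractNth_apply_of_eq _ _ _ _ h]
      simp only [diffs]
      rw [Fin.succ_castSucc, mul_assoc, mul_inv_cancel_left]
      refine congrArg₂ (fun (u v : G) => u⁻¹ * v) ?_ ?_
      · exact apply_fin_eq x (by
          simp only [Fin.succAbove, apply_ite Fin.val, Fin.lt_def, Fin.coe_castSucc,
            Fin.val_succ]
          split_ifs <;> omega)
      · exact apply_fin_eq x (by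
          simp only [Fin.succAbove, apply_ite Fin.val, Fin.lt_def, Fin.coe_castSucc,
            Fin.val_succ]
          split_ifs <;> omega)
    · rw [Fin.contractNth_apply_of_gt _ _ _ _ h]
      simp only [diffs]
      refine congrArg₂ (fun (u v : G) => u⁻¹ * v) ?_ ?_
      · exact apply_fin_eq x (by
          simp only [Fin.succAbove, apply_ite Fin.val, Fin.lt_def, Fin.coe_castSucc,
            Fin.val_succ]
          split_ifs <;> omega)
      · exact apply_fin_eq x (by
          simp only [Fin.succAbove, apply_ite Fin.val, Fin.lt_def, Fin.coe_castSucc,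
            Fin.val_succ]
          split_ifs <;> omega)

lemma psi_phi {V : Type*} (n : ℕ) (f : (Fin n → G) → V) :
    (fun g => Phi n f (Fin.partialProd g)) = f := by
  funext g
  show f (diffs n (Fin.partialProd g)) = f g
  congr 1
  funext k
  show (Fin.partialProd g k.castSucc)⁻¹ * Fin.partialProd g k.succ = g k
  rw [Fin.partialProd_succ, inv_mul_cancel_left]

lemma phi_inj {V : Type*} {n : ℕ} {f f' : (Fin n → G) → V}
    (h : Phi n f = Phi n f') : f = f' := by
  have h2 := congrArg (fun F => (fun g => F (Fin.partialProd g))) h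
  rw [psi_phi, psi_phi] at h2
  exact h2

/-- invariance of a homogeneous cochain under the (left) translation action -/
def Invt {V : Type*} (n : ℕ) (F : (Fin (n + 1) → G) → V) : Prop :=
  ∀ (s : G) (y : Fin (n + 1) → G), F (fun k => s * y k) = F y

lemma invt_phi {V : Type*} (n : ℕ) (f : (Fin n → G) → V) : Invt n (Phi n f) := by
  intro s y
  show f (diffs n fun k => s * y k) = f (diffs n y)
  congr 1
  funext k
  show (s * y k.castSucc)⁻¹ * (s * y k.succ) = _
  rw [mul_inv_rev, mul_assoc, inv_mul_cancel_left]
  rfl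

lemma pp_diffs (n : ℕ) (x : Fin (n + 1) → G) (k : Fin (n + 1)) :
    Fin.partialProd (diffs n x) k = (x 0)⁻¹ * x k := by
  induction k using Fin.induction with
  | zero => rw [Fin.partialProd_zero]; exact (inv_mul_cancel _).symm
  | succ k ih =>
    rw [Fin.partialProd_succ, ih]
    show ((x 0)⁻¹ * x k.castSucc) * ((x k.castSucc)⁻¹ * x k.succ) = _
    rw [mul_assoc, mul_inv_cancel_left]

lemma phi_invt {V : Type*} {n : ℕ} {F : (Fin (n + 1) → G) → V} (hF : Invt n F) :
    Phi n (fun g => F (Fin.partialProd g)) = F := by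
  funext x
  show F (Fin.partialProd (diffs n x)) = F x
  rw [funext (pp_diffs n x), hF (x 0)⁻¹ x]

end GroupSide

section Witness

open Finset

variable {G B M : Type*} [Group G] [AddCommGroup B] [AddCommGroup M]
variable (c : B → B → M) (p q : ℕ)
variable (α : (Fin (p + 1) → G) → B) (β : (Fin (q + 1) → G) → B)

/-- the cup-one product of `Phi α` and `Phi β`, as a function of a clamped tuple -/
def hFun (yc : ℕ → G) : M :=
  ∑ a ∈ Finset.range (p + 1), ((-1 : ℤ) ^ ((p + 1) * (q + 1) + (a + 1) * (q + 2))) •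
    c (Phi (p + 1) α fun r : Fin (p + 2) => yc (ga q a r.1))
      (Phi (q + 1) β fun m : Fin (q + 2) => yc (a + m.1))

/-- the homogeneous witness cochain -/
def hWit : (Fin (p + 1 + q + 1) → G) → M :=
  fun y => hFun c p q α β fun m =>
    y ⟨min m (p + 1 + q), Nat.lt_succ_of_le (Nat.min_le_right _ _)⟩

lemma hFun_congr {yc yc' : ℕ → G} (h : ∀ m, m ≤ p + 1 + q → yc m = yc' m) :
    hFun c p q α β yc = hFun c p q α β yc' := by
  unfold hFun
  refine Finset.sum_congr rfl fun a ha => ?_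
  rw [Finset.mem_range] at ha
  have e1 : (fun r : Fin (p + 2) => yc (ga q a r.1)) = fun r => yc' (ga q a r.1) :=
    funext fun r => h _ (by have h2 := r.2; simp only [ga]; split_ifs <;> omega)
  have e2 : (fun m : Fin (q + 2) => yc (a + m.1)) = fun m => yc' (a + m.1) :=
    funext fun m => h _ (by have h2 := m.2; omega)
  rw [e1, e2]

lemma hFun_invt (s : G) (yc : ℕ → G) :
    hFun c p q α β (fun m => s * yc m) = hFun c p q α β yc := by
  unfold hFun
  refine Finset.sum_congr rfl fun a _ => ?_
  have e1 : Phi (p + 1) α (fun r : Fin (p + 2) => s * yc (ga q a r.1))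
      = Phi (p + 1) α (fun r => yc (ga q a r.1)) := invt_phi (p + 1) α s _
  have e2 : Phi (q + 1) β (fun m : Fin (q + 2) => s * yc (a + m.1))
      = Phi (q + 1) β (fun m => yc (a + m.1)) := invt_phi (q + 1) β s _
  rw [e1, e2]

lemma hWit_invt : Invt (p + 1 + q) (hWit c p q α β) := by
  intro s y
  exact hFun_invt c p q α β s
    (fun m => y ⟨min m (p + 1 + q), Nat.lt_succ_of_le (Nat.min_le_right _ _)⟩)

end Witness

lemma isCoboundary_zero {G M : Type*} [Group G] [AddCommGroup M] (n : ℕ) :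
    IsCoboundary (G := G) (M := M) n 0 := by
  cases n with
  | zero => rfl
  | succ m =>
    refine ⟨0, ?_⟩
    funext g
    simp [dAdd]

end Aux

/-- If `c : B × B → M` is a symmetric ℤ-bilinear pairing and
`α ∈ Z^i(G,B)`, `β ∈ Z^j(G,B)` are cocycles, then
`α ∧_c β − (−1)^{ij} β ∧_c α ∈ B^{i+j}(G,M)`; hence on cohomology
`[α] ∪_c [β] = (−1)^{ij} [β] ∪_c [α]`. -/
theorem cup_graded_comm {G B M : Type*} [Group G] [AddCommGroup B] [AddCommGroup M]
    (c : B → B → M)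
    (hc₁ : ∀ b₁ b₂ b₃, c (b₁ + b₂) b₃ = c b₁ b₃ + c b₂ b₃)
    (hc₂ : ∀ b₁ b₂ b₃, c b₁ (b₂ + b₃) = c b₁ b₂ + c b₁ b₃)
    (hsym : ∀ b₁ b₂, c b₁ b₂ = c b₂ b₁)
    {i j : ℕ} (α : (Fin i → G) → B) (β : (Fin j → G) → B)
    (hα : dAdd i α = 0) (hβ : dAdd j β = 0) :
    IsCoboundary (i + j) (fun g =>
      wedge c α β g -
        ((-1 : ℤ) ^ (i * j)) •
          wedge c β α (fun k => g (Fin.cast (Nat.add_comm j i) k))) := by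
  rcases j with _ | q
  · -- j = 0 : the difference is pointwise zero by symmetry of `c`
    have hz : (fun g : Fin (i + 0) → G => wedge c α β g -
        ((-1 : ℤ) ^ (i * 0)) • wedge c β α (fun k => g (Fin.cast (Nat.add_comm 0 i) k)))
        = 0 := by
      funext g
      simp only [Nat.mul_zero, pow_zero, one_smul, wedge, Pi.zero_apply]
      have e1 : (α fun k : Fin i => g (Fin.castAdd 0 k))
          = (α fun k : Fin i => g (Fin.cast (Nat.add_comm 0 i) (Fin.natAdd 0 k))) :=
        congrArg α (funext fun k => apply_fin_eq g (by
          simp only [Fin.coe_castAdd, Fin.coe_cast, Fin.coe_natAdd]; omega))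
      have e2 : (β fun k : Fin 0 => g (Fin.natAdd i k))
          = (β fun k : Fin 0 => g (Fin.cast (Nat.add_comm 0 i) (Fin.castAdd i k))) :=
        congrArg β (funext fun k => k.elim0)
      rw [e1, e2, hsym]
      exact sub_self _
    rw [hz]
    exact isCoboundary_zero _
  · rcases i with _ | p
    · -- i = 0
      have hz : (fun g : Fin (0 + (q + 1)) → G => wedge c α β g -
          ((-1 : ℤ) ^ (0 * (q + 1))) •
            wedge c β α (fun k => g (Fin.cast (Nat.add_comm (q + 1) 0) k))) = 0 := by
        funext g
        simp only [Nat.zero_mul, pow_zero, one_smul, wedge, Pi.zero_apply]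
        have e1 : (α fun k : Fin 0 => g (Fin.castAdd (q + 1) k))
            = (α fun k : Fin 0 => g (Fin.cast (Nat.add_comm (q + 1) 0) (Fin.natAdd (q + 1) k))) :=
          congrArg α (funext fun k => k.elim0)
        have e2 : (β fun k : Fin (q + 1) => g (Fin.natAdd 0 k))
            = (β fun k : Fin (q + 1) => g (Fin.cast (Nat.add_comm (q + 1) 0) (Fin.castAdd 0 k))) :=
          congrArg β (funext fun k => apply_fin_eq g (by
            simp only [Fin.coe_castAdd, Fin.coe_cast, Fin.coe_natAdd]; omega))
        rw [e1, e2, hsym]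
        exact sub_self _
      rw [hz]
      exact isCoboundary_zero _
    · -- main case : i = p + 1, j = q + 1
      refine ⟨fun g => hWit c p q α β (Fin.partialProd g), ?_⟩
      show _ = dAdd (p + 1 + q) (fun g => hWit c p q α β (Fin.partialProd g))
      refine phi_inj (n := p + 1 + q + 1) ?_
      rw [phi_dAdd (p + 1 + q) (fun g => hWit c p q α β (Fin.partialProd g)),
        phi_invt (hWit_invt c p q α β)]
      funext xF
      -- clamped homogeneous tuple
      set x : ℕ → G := fun m =>
        xF ⟨min m (p + 1 + q + 1), Nat.lt_succ_of_le (Nat.min_le_right _ _)⟩ with hx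
      set atomF : (ℕ → ℕ) → (ℕ → ℕ) → M := fun ff gg =>
        c (Phi (p + 1) α fun r : Fin (p + 2) => x (ff r.1))
          (Phi (q + 1) β fun m : Fin (q + 2) => x (gg m.1)) with hatomF
      have hatom : ∀ f f' g g' : ℕ → ℕ, (∀ r, r ≤ p + 1 → f r = f' r) →
          (∀ m, m ≤ q + 1 → g m = g' m) → atomF f g = atomF f' g' := by
        intro f f' g g' h1 h2
        show c (Phi (p + 1) α fun r : Fin (p + 2) => x (f r.1))
            (Phi (q + 1) β fun m : Fin (q + 2) => x (g m.1)) = _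
        have e1 : (fun r : Fin (p + 2) => x (f r.1)) = fun r => x (f' r.1) :=
          funext fun r => by have hr := r.2; rw [h1 r.1 (by omega)]
        have e2 : (fun m : Fin (q + 2) => x (g m.1)) = fun m => x (g' m.1) :=
          funext fun m => by have hm := m.2; rw [h2 m.1 (by omega)]
        rw [e1, e2]
      have hdA : dHom (p + 1) (Phi (p + 1) α) = 0 := by
        rw [← phi_dAdd (p + 1) α, hα]; rfl
      have hdB : dHom (q + 1) (Phi (q + 1) β) = 0 := by
        rw [← phi_dAdd (q + 1) β, hβ]; rfl
      have hcore := core atomF (p + 1) q hatom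
      -- vanishing of the `(dA) ∪₁ B` terms
      have hv1 : (∑ a ∈ Finset.range (p + 1 + 1), ∑ r ∈ Finset.range (p + 1 + 2),
          cU atomF (p + 1) q a r) = 0 := by
        refine Finset.sum_eq_zero fun a ha => ?_
        rw [Finset.mem_range] at ha
        rw [← Fin.sum_univ_eq_sum_range (fun r => cU atomF (p + 1) q a r) (p + 1 + 2)]
        have hstep : ∀ r : Fin (p + 1 + 2), cU atomF (p + 1) q a r.1
            = ((-1 : ℤ) ^ ((p + 1 + 1) * (q + 1) + (a + 1) * (q + 2) + 1)) •
              (((-1 : ℤ) ^ (r : ℕ)) • c (Phi (p + 1) α fun s : Fin (p + 2) =>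
                  (fun t : Fin (p + 1 + 2) => x (ga q a t.1)) (r.succAbove s))
                (Phi (q + 1) β fun m : Fin (q + 2) => x (a + m.1))) := by
          intro r
          simp only [cU, hatomF]
          rw [pow_add, mul_smul]
          have e : (fun s : Fin (p + 2) => x (ga q a (dl r.1 s.1)))
              = fun s => x (ga q a (r.succAbove s).1) :=
            funext fun s => congrArg x (congrArg (ga q a) (by
              simp only [Fin.succAbove, apply_ite Fin.val, Fin.lt_def, Fin.coe_castSucc,
                Fin.val_succ, dl]
              try split_ifs <;> omega))
          rw [e]
        rw [Finset.sum_congr rfl (fun r _ => hstep r), ← Finset.smul_sum]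
        have hhom : (∑ r : Fin (p + 1 + 2), ((-1 : ℤ) ^ (r : ℕ)) •
            c (Phi (p + 1) α fun s : Fin (p + 2) =>
                (fun t : Fin (p + 1 + 2) => x (ga q a t.1)) (r.succAbove s))
              (Phi (q + 1) β fun m : Fin (q + 2) => x (a + m.1))) = 0 := by
          set φb : B →+ M := AddMonoidHom.mk'
            (fun u => c u (Phi (q + 1) β fun m : Fin (q + 2) => x (a + m.1)))
            (fun u v => hc₁ u v _) with hφ
          have h1 : ∀ r : Fin (p + 1 + 2), ((-1 : ℤ) ^ (r : ℕ)) •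
              c (Phi (p + 1) α fun s : Fin (p + 2) =>
                  (fun t : Fin (p + 1 + 2) => x (ga q a t.1)) (r.succAbove s))
                (Phi (q + 1) β fun m : Fin (q + 2) => x (a + m.1))
              = φb (((-1 : ℤ) ^ (r : ℕ)) • Phi (p + 1) α fun s : Fin (p + 2) =>
                  (fun t : Fin (p + 1 + 2) => x (ga q a t.1)) (r.succAbove s)) := by
            intro r
            rw [map_zsmul]
            rfl
          rw [Finset.sum_congr rfl (fun r _ => h1 r), ← map_sum]
          have h2 : (∑ r : Fin (p + 1 + 2), ((-1 : ℤ) ^ (r : ℕ)) •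
              Phi (p + 1) α fun s : Fin (p + 2) =>
                (fun t : Fin (p + 1 + 2) => x (ga q a t.1)) (r.succAbove s))
              = dHom (p + 1) (Phi (p + 1) α) (fun t : Fin (p + 1 + 2) => x (ga q a t.1)) := rfl
          rw [h2, hdA]
          simp
        rw [hhom, smul_zero]
      -- vanishing of the `A ∪₁ (dB)` terms
      have hv2 : (∑ a ∈ Finset.range (p + 1), ∑ r ∈ Finset.range (q + 3),
          cV atomF (p + 1) q a r) = 0 := by
        refine Finset.sum_eq_zero fun a ha => ?_
        rw [Finset.mem_range] at ha
        rw [← Fin.sum_univ_eq_sum_range (fun r => cV atomF (p + 1) q a r) (q + 3)]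
        have hstep : ∀ r : Fin (q + 3), cV atomF (p + 1) q a r.1
            = ((-1 : ℤ) ^ ((p + 1 + 1) * (q + 1) + 1 + a * (q + 1))) •
              (((-1 : ℤ) ^ (r : ℕ)) • c (Phi (p + 1) α fun s : Fin (p + 2) => x (gb q a s.1))
                (Phi (q + 1) β fun m : Fin (q + 2) =>
                  (fun t : Fin (q + 3) => x (a + t.1)) (r.succAbove m))) := by
          intro r
          simp only [cV, hatomF]
          rw [pow_add, mul_smul]
          have e : (fun m : Fin (q + 2) => x (a + dl r.1 m.1))
              = fun m => x (a + (r.succAbove m).1) :=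
            funext fun m => congrArg x (congrArg (a + ·) (by
              simp only [Fin.succAbove, apply_ite Fin.val, Fin.lt_def, Fin.coe_castSucc,
                Fin.val_succ, dl]
              try split_ifs <;> omega))
          rw [e]
        rw [Finset.sum_congr rfl (fun r _ => hstep r), ← Finset.smul_sum]
        have hhom : (∑ r : Fin (q + 3), ((-1 : ℤ) ^ (r : ℕ)) •
            c (Phi (p + 1) α fun s : Fin (p + 2) => x (gb q a s.1))
              (Phi (q + 1) β fun m : Fin (q + 2) =>
                (fun t : Fin (q + 3) => x (a + t.1)) (r.succAbove m))) = 0 := by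
          set ψu : B →+ M := AddMonoidHom.mk'
            (fun v => c (Phi (p + 1) α fun s : Fin (p + 2) => x (gb q a s.1)) v)
            (fun u v => hc₂ _ u v) with hψ
          have h1 : ∀ r : Fin (q + 3), ((-1 : ℤ) ^ (r : ℕ)) •
              c (Phi (p + 1) α fun s : Fin (p + 2) => x (gb q a s.1))
                (Phi (q + 1) β fun m : Fin (q + 2) =>
                  (fun t : Fin (q + 3) => x (a + t.1)) (r.succAbove m))
              = ψu (((-1 : ℤ) ^ (r : ℕ)) • Phi (q + 1) β fun m : Fin (q + 2) =>
                  (fun t : Fin (q + 3) => x (a + t.1)) (r.succAbove m)) := by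
            intro r
            rw [map_zsmul]
            rfl
          rw [Finset.sum_congr rfl (fun r _ => h1 r), ← map_sum]
          have h2 : (∑ r : Fin (q + 3), ((-1 : ℤ) ^ (r : ℕ)) •
              Phi (q + 1) β fun m : Fin (q + 2) =>
                (fun t : Fin (q + 3) => x (a + t.1)) (r.succAbove m))
              = dHom (q + 1) (Phi (q + 1) β) (fun t : Fin (q + 3) => x (a + t.1)) := rfl
          rw [h2, hdB]
          simp
        rw [hhom, smul_zero]
      -- the homogeneous differential of the witness is the core LHS
      have hLHS : dHom (p + 1 + q) (hWit c p q α β) xF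
          = ∑ k ∈ Finset.range (p + 1 + q + 2), ∑ a ∈ Finset.range (p + 1),
              cT atomF (p + 1) q k a := by
        have e_k : ∀ k : Fin (p + 1 + q + 2), hWit c p q α β (fun s => xF (k.succAbove s))
            = hFun c p q α β (fun m => x (dl k.1 m)) := by
          intro k
          refine hFun_congr c p q α β ?_
          intro m hm
          rw [hx]
          refine apply_fin_eq xF ?_
          have hk := k.2
          simp only [Fin.succAbove, apply_ite Fin.val, Fin.lt_def, Fin.coe_castSucc,
            Fin.val_succ, dl]
          split_ifs <;> omega
        calc dHom (p + 1 + q) (hWit c p q α β) xF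
            = ∑ k : Fin (p + 1 + q + 2), ((-1 : ℤ) ^ (k : ℕ)) •
                hFun c p q α β (fun m => x (dl k.1 m)) :=
              Finset.sum_congr rfl fun k _ => by rw [e_k k]
          _ = ∑ k ∈ Finset.range (p + 1 + q + 2), ((-1 : ℤ) ^ k) •
                hFun c p q α β (fun m => x (dl k m)) :=
              Fin.sum_univ_eq_sum_range
                (fun k => ((-1 : ℤ) ^ k) • hFun c p q α β (fun m => x (dl k m))) _
          _ = ∑ k ∈ Finset.range (p + 1 + q + 2), ∑ a ∈ Finset.range (p + 1),
                cT atomF (p + 1) q k a := by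
              refine Finset.sum_congr rfl fun k _ => ?_
              simp only [hFun]
              rw [Finset.smul_sum]
              refine Finset.sum_congr rfl fun a _ => ?_
              rw [smul_smul, ← pow_add]
              simp only [cT, hatomF]
      -- the two extreme terms are the image of the target under `Phi`
      rw [hLHS, hcore, hv1, hv2, zero_add, zero_add]
      show (wedge c α β (diffs (p + 1 + q + 1) xF) - ((-1 : ℤ) ^ ((p + 1) * (q + 1))) •
          wedge c β α (fun k => diffs (p + 1 + q + 1) xF
            (Fin.cast (Nat.add_comm (q + 1) (p + 1)) k)))
          = cX1 atomF (p + 1) + cX2 atomF (p + 1) q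
      simp only [wedge, cX1, cX2, hatomF, Phi]
      have e1 : (fun k : Fin (p + 1) => diffs (p + 1 + q + 1) xF (Fin.castAdd (q + 1) k))
          = diffs (p + 1) (fun r : Fin (p + 2) => x r.1) := by
        funext k
        simp only [diffs]
        rw [hx]
        refine congrArg₂ (fun (u v : G) => u⁻¹ * v) ?_ ?_ <;>
          exact apply_fin_eq xF (by
            have hk := k.2
            simp only [Fin.coe_castSucc, Fin.val_succ, Fin.coe_castAdd]
            omega)
      have e2 : (fun k : Fin (q + 1) => diffs (p + 1 + q + 1) xF (Fin.natAdd (p + 1) k))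
          = diffs (q + 1) (fun m : Fin (q + 2) => x (p + 1 + m.1)) := by
        funext k
        simp only [diffs]
        rw [hx]
        refine congrArg₂ (fun (u v : G) => u⁻¹ * v) ?_ ?_ <;>
          exact apply_fin_eq xF (by
            have hk := k.2
            simp only [Fin.coe_castSucc, Fin.val_succ, Fin.coe_natAdd]
            omega)
      have e3 : (fun k : Fin (q + 1) => diffs (p + 1 + q + 1) xF
            (Fin.cast (Nat.add_comm (q + 1) (p + 1)) (Fin.castAdd (p + 1) k)))
          = diffs (q + 1) (fun m : Fin (q + 2) => x m.1) := by
        funext k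
        simp only [diffs]
        rw [hx]
        refine congrArg₂ (fun (u v : G) => u⁻¹ * v) ?_ ?_ <;>
          exact apply_fin_eq xF (by
            have hk := k.2
            simp only [Fin.coe_castSucc, Fin.val_succ, Fin.coe_castAdd, Fin.coe_cast]
            omega)
      have e4 : (fun k : Fin (p + 1) => diffs (p + 1 + q + 1) xF
            (Fin.cast (Nat.add_comm (q + 1) (p + 1)) (Fin.natAdd (q + 1) k)))
          = diffs (p + 1) (fun r : Fin (p + 2) => x (q + 1 + r.1)) := by
        funext k
        simp only [diffs]
        rw [hx]
        refine congrArg₂ (fun (u v : G) => u⁻¹ * v) ?_ ?_ <;>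
          exact apply_fin_eq xF (by
            have hk := k.2
            simp only [Fin.coe_castSucc, Fin.val_succ, Fin.coe_natAdd, Fin.coe_cast]
            omega)
      rw [e1, e2, e3, e4,
        hsym (β (diffs (q + 1) fun m : Fin (q + 2) => x m.1))
          (α (diffs (p + 1) fun r : Fin (p + 2) => x (q + 1 + r.1))),
        sub_eq_add_neg, ← neg_smul,
        show -((-1 : ℤ) ^ ((p + 1) * (q + 1))) = (-1 : ℤ) ^ ((p + 1) * (q + 1) + 1) from by
          rw [pow_succ]; ring]

end Zesting
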